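/- Generalised Harrop's rule for disjunction-free antecedents in the complete system (Piecha–Schroeder-Heister 2015): For every disjunction-free propositional formula A (built from atoms using only ∧ and →) and all propositional formulas B, C, the complete system validates (A→(B∨C))→((A→B)∨(A→C)), i.e., for every set S of atomic rules there is a closed S-valid argument for this formula. -/
import Mathlib


/-!
Common framework for proof-theoretic validity (Prawitz / Piecha–Schroeder-Heister style).

* Propositional formulas over countably many atoms (`ℕ`), with `⊥`, `∧`, `∨`, `→`;
  `¬A` abbreviates `A → ⊥`.
* Higher-level atomic rules: a rule has a finite list of premises, each premise being
  a pair of (a finite list of lower-level rules that may be discharged, an atomic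
  conclusion), together with an atomic conclusion.  An atomic axiom `p̄` is
  `HLRule.mk [] p`; an assumption of an atom is identified with its axiom rule.
* `AtDeriv S p`: the atom `p` is derivable using only rules of `S`
  (discharged rules become available).
* `Deriv S Γ φ`: natural deduction NJ augmented with the atomic rules in `S`,
  from hypotheses `Γ`.  `⊢_IPC` is `Deriv ∅ ∅`.
* `Valid 𝔖 S φ` formalizes "there is a closed `S`-valid argument for `φ`" relative to
  the proof-theoretic system `𝔖` (acceptable extensions of `S` are the supersets of `S`
  belonging to `𝔖`).  Unfolding the inductive definition of `S`-validity of arguments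
  (atomic case, closed introduction case, closed non-introduction case, open case)
  clause-by-clause on the conclusion yields exactly the following recursion on formulas:
  a closed valid argument for `A ∧ B` reduces (via the non-introduction case) to one
  ending in `∧`-introduction, i.e. closed valid arguments for `A` and `B`; similarly for
  `∨`; a closed valid argument for `A → B` reduces to one ending in `→`-introduction,
  whose immediate subargument is an open argument of `B` from the assumption `A`, which
  by the open case is valid iff every acceptable extension `S' ∈ 𝔖` of `S` having a
  closed `S'`-valid argument for `A` has one for `B`; a closed valid argument for an
  atom `p` exists iff `p` is `S`-derivable; and for `⊥` (which has no introduction rule,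
  and is governed by the rules `⊥/p` for every atom `p`) iff every atom is `S`-derivable.
-/

/-- Propositional formulas over atoms `ℕ`. -/
inductive PropForm : Type
  | atom : ℕ → PropForm
  | falsum : PropForm
  | conj : PropForm → PropForm → PropForm
  | disj : PropForm → PropForm → PropForm
  | impl : PropForm → PropForm → PropForm
  deriving DecidableEq

/-- `¬A` abbreviates `A → ⊥`. -/
def PropForm.neg (A : PropForm) : PropForm := .impl A .falsum

/-- Higher-level atomic rules. -/
inductive HLRule : Type
  | mk : List (List HLRule × ℕ) → ℕ → HLRule

/-- `AtDeriv S p`: the atom `p` is derivable using only the atomic rules in `S`;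
applying a rule requires deriving each premise with its discharged rules made available. -/
inductive AtDeriv : Set HLRule → ℕ → Prop
  | app (S : Set HLRule) (prems : List (List HLRule × ℕ)) (concl : ℕ)
      (hmem : HLRule.mk prems concl ∈ S)
      (hprem : ∀ pr ∈ prems, AtDeriv (S ∪ {R | R ∈ pr.1}) pr.2) :
      AtDeriv S concl

/-- Natural deduction NJ for intuitionistic propositional logic, augmented with the
atomic rules in `S`, with hypotheses `Γ`.  `Deriv ∅ Γ φ` is `Γ ⊢_IPC φ`. -/
inductive Deriv : Set HLRule → Set PropForm → PropForm → Prop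
  | hyp {S : Set HLRule} {Γ : Set PropForm} {A : PropForm} :
      A ∈ Γ → Deriv S Γ A
  | falsumE {S : Set HLRule} {Γ : Set PropForm} {A : PropForm} :
      Deriv S Γ .falsum → Deriv S Γ A
  | andI {S : Set HLRule} {Γ : Set PropForm} {A B : PropForm} :
      Deriv S Γ A → Deriv S Γ B → Deriv S Γ (.conj A B)
  | andE1 {S : Set HLRule} {Γ : Set PropForm} {A B : PropForm} :
      Deriv S Γ (.conj A B) → Deriv S Γ A
  | andE2 {S : Set HLRule} {Γ : Set PropForm} {A B : PropForm} :
      Deriv S Γ (.conj A B) → Deriv S Γ B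
  | orI1 {S : Set HLRule} {Γ : Set PropForm} {A B : PropForm} :
      Deriv S Γ A → Deriv S Γ (.disj A B)
  | orI2 {S : Set HLRule} {Γ : Set PropForm} {A B : PropForm} :
      Deriv S Γ B → Deriv S Γ (.disj A B)
  | orE {S : Set HLRule} {Γ : Set PropForm} {A B C : PropForm} :
      Deriv S Γ (.disj A B) → Deriv S (insert A Γ) C → Deriv S (insert B Γ) C →
      Deriv S Γ C
  | implI {S : Set HLRule} {Γ : Set PropForm} {A B : PropForm} :
      Deriv S (insert A Γ) B → Deriv S Γ (.impl A B)
  | implE {S : Set HLRule} {Γ : Set PropForm} {A B : PropForm} :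
      Deriv S Γ (.impl A B) → Deriv S Γ A → Deriv S Γ B
  | rule {S : Set HLRule} {Γ : Set PropForm}
      (prems : List (List HLRule × ℕ)) (concl : ℕ) :
      HLRule.mk prems concl ∈ S →
      (∀ pr ∈ prems, Deriv (S ∪ {R | R ∈ pr.1}) Γ (.atom pr.2)) →
      Deriv S Γ (.atom concl)

/-- `⊢_IPC φ` : derivability of `φ` in intuitionistic propositional natural deduction. -/
def IPC (φ : PropForm) : Prop := Deriv ∅ ∅ φ

/-- Auxiliary form of validity, by recursion on the formula. -/
def ValidAux (𝔖 : Set (Set HLRule)) : PropForm → Set HLRule → Prop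
  | .atom p, S => AtDeriv S p
  | .falsum, S => ∀ a : ℕ, AtDeriv S a
  | .conj A B, S => ValidAux 𝔖 A S ∧ ValidAux 𝔖 B S
  | .disj A B, S => ValidAux 𝔖 A S ∨ ValidAux 𝔖 B S
  | .impl A B, S => ∀ S' ∈ 𝔖, S ⊆ S' → ValidAux 𝔖 A S' → ValidAux 𝔖 B S'

/-- `Valid 𝔖 S φ`: relative to the proof-theoretic system `𝔖` (in which the acceptable
extensions of `S` are exactly the supersets of `S` belonging to `𝔖`), there is a closed
`S`-valid argument for `φ`. -/
def Valid (𝔖 : Set (Set HLRule)) (S : Set HLRule) (φ : PropForm) : Prop :=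
  ValidAux 𝔖 φ S

/-- `𝔖 ⊨ φ`: for every `S ∈ 𝔖` there is a closed `S`-valid argument for `φ`
(acceptable extensions taken in `𝔖`). -/
def Models (𝔖 : Set (Set HLRule)) (φ : PropForm) : Prop :=
  ∀ S ∈ 𝔖, Valid 𝔖 S φ

/-- The complete proof-theoretic system: all sets of atomic rules of all levels. -/
def completeSystem : Set (Set HLRule) := Set.univ

/-- `S`-validity of the open one-premise/one-assumption argument from `A` to `B`
(relative to `𝔖`): by the open case, for every acceptable extension `S' ∈ 𝔖` of `S`,
substituting any closed `S'`-valid argument for the assumption `A` yields an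
`S'`-valid closed argument, which (the final step not being an introduction rule)
amounts to the existence of a closed `S'`-valid argument for `B`. -/
def OpenArgValid1 (𝔖 : Set (Set HLRule)) (S : Set HLRule) (A B : PropForm) : Prop :=
  ∀ S' ∈ 𝔖, S ⊆ S' → Valid 𝔖 S' A → Valid 𝔖 S' B

/-- Disjunction-free formulas: built from atoms using only `∧` and `→`. -/
def DisjFree : PropForm → Prop
  | .atom _ => True
  | .falsum => False
  | .conj A B => DisjFree A ∧ DisjFree B
  | .disj _ _ => False
  | .impl A B => DisjFree A ∧ DisjFree B


/-! ### Auxiliary development for the generalised Harrop rule -/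

/-- The set of rules in a list. -/
def lset (L : List HLRule) : Set HLRule := {R | R ∈ L}

lemma lset_append (a b : List HLRule) : lset (a ++ b) = lset a ∪ lset b := by
  ext x; simp [lset]

/-- A clause record: (rules of the antecedent, premises of the antecedent, conclusion atom). -/
def ruleOf (c : List HLRule × List (List HLRule × ℕ) × ℕ) : HLRule := .mk c.2.1 c.2.2

def premOf (c : List HLRule × List (List HLRule × ℕ) × ℕ) : List HLRule × ℕ := (c.1, c.2.2)

/-- The clause decomposition of a disjunction-free formula. -/
def cl : PropForm → List (List HLRule × List (List HLRule × ℕ) × ℕ)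
  | .atom p => [([], [], p)]
  | .conj A B => cl A ++ cl B
  | .impl A B => (cl B).map (fun c => ((cl A).map ruleOf ++ c.1, (cl A).map premOf ++ c.2.1, c.2.2))
  | _ => []

def rulesOf (A : PropForm) : List HLRule := (cl A).map ruleOf
def premsOf (A : PropForm) : List (List HLRule × ℕ) := (cl A).map premOf

abbrev VA (A : PropForm) (S : Set HLRule) : Prop := ValidAux Set.univ A S

lemma atMono : ∀ {S : Set HLRule} {p : ℕ}, AtDeriv S p → ∀ {T : Set HLRule}, S ⊆ T → AtDeriv T p := by
  intro S p h
  induction h with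
  | app S prems concl hmem hprem ih =>
    intro T hST
    exact AtDeriv.app T prems concl (hST hmem)
      (fun pr hpr => ih pr hpr (Set.union_subset_union_left _ hST))

lemma vMono : ∀ (B : PropForm) {S T : Set HLRule}, S ⊆ T → VA B S → VA B T := by
  intro B
  induction B with
  | atom p => intro S T h hv; exact atMono hv h
  | falsum => intro S T h hv a; exact atMono (hv a) h
  | conj B₁ B₂ ih₁ ih₂ =>
    intro S T h hv
    simp only [VA, ValidAux] at hv ⊢
    exact ⟨ih₁ h hv.1, ih₂ h hv.2⟩
  | disj B₁ B₂ ih₁ ih₂ =>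
    intro S T h hv
    simp only [VA, ValidAux] at hv ⊢
    exact hv.elim (fun x => Or.inl (ih₁ h x)) (fun x => Or.inr (ih₂ h x))
  | impl B₁ B₂ ih₁ ih₂ =>
    intro S T h hv
    simp only [VA, ValidAux] at hv ⊢
    exact fun S' hS' hsub hB => hv S' hS' (h.trans hsub) hB

/-- Removal of the rules of `A` from atom derivations, given validity of `A`
(assuming the key admissibility property `he`). -/
lemma bgen (A : PropForm)
    (he : ∀ S, VA A S → ∀ c ∈ cl A, (∀ pr ∈ c.2.1, AtDeriv (S ∪ lset pr.1) pr.2) → AtDeriv S c.2.2) :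
    ∀ {T : Set HLRule} {q : ℕ}, AtDeriv T q →
      ∀ S, VA A S → T ⊆ S ∪ lset (rulesOf A) → AtDeriv S q := by
  intro T q hd
  induction hd with
  | app T prems concl hmem hprem ih =>
    intro S hS hsub
    have hpr : ∀ pr ∈ prems, AtDeriv (S ∪ lset pr.1) pr.2 := by
      intro pr hpr
      refine ih pr hpr (S ∪ lset pr.1) (vMono A Set.subset_union_left hS) ?_
      intro x hx
      rcases hx with hx | hx
      · rcases hsub hx with h | h
        · exact Or.inl (Or.inl h)
        · exact Or.inr h
      · exact Or.inl (Or.inr hx)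
    rcases hsub hmem with h | h
    · exact AtDeriv.app S prems concl h hpr
    · obtain ⟨c, hc, heq⟩ := List.mem_map.1 h
      simp only [ruleOf, HLRule.mk.injEq] at heq
      obtain ⟨h1, h2⟩ := heq
      subst h1; subst h2
      exact he S hS c hc hpr

/-- The five key properties of disjunction-free formulas, by one structural induction. -/
lemma big : ∀ (A : PropForm), DisjFree A →
    (∀ S, VA A (S ∪ lset (rulesOf A))) ∧
    (∀ S, (∀ c ∈ cl A, AtDeriv (S ∪ lset c.1) c.2.2) → VA A S) ∧
    (∀ S, VA A S → ∀ c ∈ cl A, AtDeriv (S ∪ lset c.1) c.2.2) ∧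
    (∀ c ∈ cl A, ∀ T : Set HLRule, ∀ pr ∈ c.2.1, AtDeriv ((T ∪ lset c.1) ∪ lset pr.1) pr.2) ∧
    (∀ S, VA A S → ∀ c ∈ cl A, (∀ pr ∈ c.2.1, AtDeriv (S ∪ lset pr.1) pr.2) → AtDeriv S c.2.2) := by
  intro A
  induction A with
  | atom p =>
    intro _
    refine ⟨?_, ?_, ?_, ?_, ?_⟩
    · intro S
      show AtDeriv _ p
      refine AtDeriv.app _ [] p (Or.inr ?_) (by simp)
      simp [lset, rulesOf, cl, ruleOf]
    · intro S h
      have := h ([], [], p) (by simp [cl])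
      exact atMono this (fun x hx => hx.elim id (fun hx => absurd hx (by simp [lset])))
    · intro S hv c hc
      simp only [cl, List.mem_singleton] at hc
      subst hc
      exact atMono hv Set.subset_union_left
    · intro c hc T pr hpr
      simp only [cl, List.mem_singleton] at hc
      subst hc
      simp at hpr
    · intro S hv c hc _
      simp only [cl, List.mem_singleton] at hc
      subst hc
      exact hv
  | falsum => intro h; simp [DisjFree] at h
  | disj A₁ A₂ _ _ => intro h; simp [DisjFree] at h
  | conj A₁ A₂ ih₁ ih₂ =>
    intro hA
    obtain ⟨hA1, hA2⟩ : DisjFree A₁ ∧ DisjFree A₂ := hA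
    obtain ⟨a1, c1, d1, f1, e1⟩ := ih₁ hA1
    obtain ⟨a2, c2, d2, f2, e2⟩ := ih₂ hA2
    have hr : ∀ S : Set HLRule, S ∪ lset (rulesOf (.conj A₁ A₂))
        = (S ∪ lset (rulesOf A₁)) ∪ lset (rulesOf A₂) := by
      intro S
      have : rulesOf (.conj A₁ A₂) = rulesOf A₁ ++ rulesOf A₂ := by
        simp [rulesOf, cl]
      rw [this, lset_append, Set.union_assoc]
    refine ⟨?_, ?_, ?_, ?_, ?_⟩
    · intro S
      show VA A₁ _ ∧ VA A₂ _
      constructor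
      · refine vMono A₁ ?_ (a1 S)
        rw [hr S]
        exact Set.subset_union_left
      · refine vMono A₂ ?_ (a2 (S ∪ lset (rulesOf A₁)))
        rw [hr S]
    · intro S h
      have hcl : cl (.conj A₁ A₂) = cl A₁ ++ cl A₂ := by simp [cl]
      refine ⟨c1 S ?_, c2 S ?_⟩
      · intro c hc; exact h c (by rw [hcl]; exact List.mem_append_left _ hc)
      · intro c hc; exact h c (by rw [hcl]; exact List.mem_append_right _ hc)
    · intro S hv c hc
      obtain ⟨hv1, hv2⟩ : VA A₁ S ∧ VA A₂ S := hv
      rcases List.mem_append.1 (by simpa [cl] using hc) with h | h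
      · exact d1 S hv1 c h
      · exact d2 S hv2 c h
    · intro c hc T pr hpr
      rcases List.mem_append.1 (by simpa [cl] using hc) with h | h
      · exact f1 c h T pr hpr
      · exact f2 c h T pr hpr
    · intro S hv c hc hp
      obtain ⟨hv1, hv2⟩ : VA A₁ S ∧ VA A₂ S := hv
      rcases List.mem_append.1 (by simpa [cl] using hc) with h | h
      · exact e1 S hv1 c h hp
      · exact e2 S hv2 c h hp
  | impl A₁ A₂ ih₁ ih₂ =>
    intro hA
    obtain ⟨hA1, hA2⟩ : DisjFree A₁ ∧ DisjFree A₂ := hA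
    obtain ⟨a1, c1, d1, f1, e1⟩ := ih₁ hA1
    obtain ⟨a2, c2, d2, f2, e2⟩ := ih₂ hA2
    have b1 : ∀ (T : Set HLRule) (q : ℕ), AtDeriv T q → ∀ S, VA A₁ S →
        T ⊆ S ∪ lset (rulesOf A₁) → AtDeriv S q := fun T q hd => bgen A₁ e1 hd
    have hclmem : ∀ c ∈ cl A₂,
        ((cl A₁).map ruleOf ++ c.1, (cl A₁).map premOf ++ c.2.1, c.2.2) ∈ cl (.impl A₁ A₂) := by
      intro c hc
      simp only [cl, List.mem_map]
      exact ⟨c, hc, rfl⟩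
    refine ⟨?_, ?_, ?_, ?_, ?_⟩
    · -- (a)
      intro S
      intro U hU hsub hA1U
      refine c2 U ?_
      intro c hc
      refine AtDeriv.app _ ((cl A₁).map premOf ++ c.2.1) c.2.2 ?_ ?_
      · refine Or.inl (hsub (Or.inr ?_))
        show _ ∈ rulesOf (.impl A₁ A₂)
        simp only [rulesOf, List.mem_map]
        exact ⟨_, hclmem c hc, rfl⟩
      · intro pr hpr
        rcases List.mem_append.1 hpr with h | h
        · obtain ⟨c'', hc'', rfl⟩ := List.mem_map.1 h
          exact d1 (U ∪ lset c.1) (vMono A₁ Set.subset_union_left hA1U) c'' hc''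
        · exact f2 c hc U pr h
    · -- (c)
      intro S h
      intro U hU hsub hA1U
      refine c2 U ?_
      intro c hc
      have hder := h _ (hclmem c hc)
      have hder2 : AtDeriv ((U ∪ lset c.1) ∪ lset (rulesOf A₁)) c.2.2 := by
        refine atMono hder ?_
        intro x hx
        rcases hx with hx | hx
        · exact Or.inl (Or.inl (hsub hx))
        · rw [show lset ((cl A₁).map ruleOf ++ c.1) = lset (rulesOf A₁) ∪ lset c.1 from
            lset_append _ _] at hx
          rcases hx with hx | hx
          · exact Or.inr hx
          · exact Or.inl (Or.inr hx)
      exact b1 _ _ hder2 (U ∪ lset c.1) (vMono A₁ Set.subset_union_left hA1U) subset_rfl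
    · -- (d)
      intro S hv c hc
      simp only [cl, List.mem_map] at hc
      obtain ⟨c', hc', rfl⟩ := hc
      have hA1' : VA A₁ (S ∪ lset (rulesOf A₁)) := a1 S
      have hA2' : VA A₂ (S ∪ lset (rulesOf A₁)) :=
        hv (S ∪ lset (rulesOf A₁)) trivial Set.subset_union_left hA1'
      have := d2 _ hA2' c' hc'
      refine atMono this ?_
      intro x hx
      rw [show lset ((cl A₁).map ruleOf ++ c'.1) = lset (rulesOf A₁) ∪ lset c'.1 from
        lset_append _ _]
      rcases hx with (hx | hx) | hx
      · exact Or.inl hx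
      · exact Or.inr (Or.inl hx)
      · exact Or.inr (Or.inr hx)
    · -- (f)
      intro c hc T pr hpr
      simp only [cl, List.mem_map] at hc
      obtain ⟨c', hc', rfl⟩ := hc
      have hls : lset ((cl A₁).map ruleOf ++ c'.1) = lset (rulesOf A₁) ∪ lset c'.1 :=
        lset_append _ _
      rcases List.mem_append.1 hpr with h | h
      · obtain ⟨c'', hc'', rfl⟩ := List.mem_map.1 h
        have hv1 : VA A₁ ((T ∪ lset c'.1) ∪ lset (rulesOf A₁)) := a1 (T ∪ lset c'.1)
        have := d1 _ hv1 c'' hc''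
        refine atMono this ?_
        intro x hx
        rw [hls]
        rcases hx with ((hx | hx) | hx) | hx
        · exact Or.inl (Or.inl hx)
        · exact Or.inl (Or.inr (Or.inr hx))
        · exact Or.inl (Or.inr (Or.inl hx))
        · exact Or.inr hx
      · have := f2 c' hc' (T ∪ lset (rulesOf A₁)) pr h
        refine atMono this ?_
        intro x hx
        rw [hls]
        rcases hx with ((hx | hx) | hx) | hx
        · exact Or.inl (Or.inl hx)
        · exact Or.inl (Or.inr (Or.inl hx))
        · exact Or.inl (Or.inr (Or.inr hx))
        · exact Or.inr hx
    · -- (e)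
      intro S hv c hc hp
      simp only [cl, List.mem_map] at hc
      obtain ⟨c', hc', rfl⟩ := hc
      have hA1S : VA A₁ S := by
        refine c1 S ?_
        intro c'' hc''
        exact hp (premOf c'') (List.mem_append_left _ (List.mem_map.2 ⟨c'', hc'', rfl⟩))
      have hA2S : VA A₂ S := hv S trivial subset_rfl hA1S
      exact e2 S hA2S c' hc' (fun pr hpr => hp pr (List.mem_append_right _ hpr))

/-- Conservativity of adding the rules of a valid disjunction-free formula,
for validity of arbitrary formulas. -/
lemma conserv (A : PropForm)
    (hb : ∀ (S : Set HLRule) (q : ℕ), VA A S → AtDeriv (S ∪ lset (rulesOf A)) q → AtDeriv S q) :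
    ∀ (B : PropForm) (S : Set HLRule), VA A S → VA B (S ∪ lset (rulesOf A)) → VA B S := by
  intro B
  induction B with
  | atom p => intro S hAS h; exact hb S p hAS h
  | falsum => intro S hAS h a; exact hb S a hAS (h a)
  | conj B₁ B₂ ih₁ ih₂ =>
    intro S hAS h
    obtain ⟨h1, h2⟩ : VA B₁ _ ∧ VA B₂ _ := h
    exact ⟨ih₁ S hAS h1, ih₂ S hAS h2⟩
  | disj B₁ B₂ ih₁ ih₂ =>
    intro S hAS h
    rcases (h : VA B₁ _ ∨ VA B₂ _) with h | h
    · exact Or.inl (ih₁ S hAS h)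
    · exact Or.inr (ih₂ S hAS h)
  | impl B₁ B₂ ih₁ ih₂ =>
    intro S hAS h
    intro T hT hsub hB1
    refine ih₂ T (vMono A hsub hAS) ?_
    refine h (T ∪ lset (rulesOf A)) trivial (Set.union_subset_union_left _ hsub)
      (vMono B₁ Set.subset_union_left hB1)

/-- **Generalised Harrop's rule for disjunction-free antecedents in the complete
system (Piecha–Schroeder-Heister 2015).**  For every disjunction-free formula `A` and
all formulas `B, C`, every set `S` of atomic rules has a closed `S`-valid argument
(relative to the complete system) for `(A → (B ∨ C)) → ((A → B) ∨ (A → C))`. -/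
theorem generalised_harrop_disjFree_valid (A B C : PropForm) (hA : DisjFree A)
    (S : Set HLRule) :
    Valid completeSystem S
      (.impl (.impl A (.disj B C)) (.disj (.impl A B) (.impl A C))) := by
  simp only [Valid, completeSystem, ValidAux]
  obtain ⟨ha, hc, hd, hf, he⟩ := big A hA
  have hb : ∀ (S' : Set HLRule) (q : ℕ), VA A S' → AtDeriv (S' ∪ lset (rulesOf A)) q → AtDeriv S' q :=
    fun S' q hv hd' => bgen A he hd' S' hv subset_rfl
  intro S' _ hsub h
  have hAT : VA A (S' ∪ lset (rulesOf A)) := ha S'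
  have hBC := h (S' ∪ lset (rulesOf A)) trivial Set.subset_union_left hAT
  rcases hBC with hB | hC
  · refine Or.inl ?_
    intro U _ hS'U hAU
    exact conserv A hb B U hAU (vMono B (Set.union_subset_union_left _ hS'U) hB)
  · refine Or.inr ?_
    intro U _ hS'U hAU
    exact conserv A hb C U hAU (vMono C (Set.union_subset_union_left _ hS'U) hC)
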